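/- Let α ≠ 0 and κ = λ = 0, β ∈ ℝ. Every polynomial g ∈ ℝ[x,y,z] (without constant term) satisfying (x(y-1) - βz)∂g/∂x + α(1-x²)∂g/∂y + x·∂g/∂z = β₀ + β₁x + β₂y + β₃z for some reals β₀,...,β₃ is a linear combination of z and -x²/2 + y/α - y²/(2α) - βz²/2, with cofactors β₁x and β₀(1-y) respectively (in particular β₂ = -β₀ and β₃ = 0). -/

import Mathlib

open MvPolynomial

namespace Stmt9aux

lemma grow (s : ℕ → ℝ) (M : ℕ) (hstep : ∀ n, s n ≠ 0 → s (n+2) ≠ 0)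
    (hbd : ∀ n, M < n → s n = 0) : ∀ n, s n = 0 := by
  intro n
  by_contra hn
  have key : ∀ j : ℕ, s (n + 2*j) ≠ 0 := by
    intro j; induction j with
    | zero => simpa using hn
    | succ j ih =>
      have h2 := hstep _ ih
      have : n + 2*(j+1) = n + 2*j + 2 := by ring
      rw [this]; exact h2
  exact key (M+1) (hbd _ (by omega))

lemma ker_kill (α : ℝ) (t : ℕ) (c : ℕ → ℝ) (h0 : c 0 = 0) (h1 : c 1 = 0)
    (hker : ∀ m : ℕ, ((m:ℝ)+2) * c (m+2) = α * ((t:ℝ)-(m:ℝ)) * c m) : ∀ m, c m = 0 := by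
  intro m
  induction m using Nat.strong_induction_on with
  | _ m ih =>
    match m with
    | 0 => exact h0
    | 1 => exact h1
    | (m+2) =>
      have h := hker m
      rw [ih m (by omega)] at h
      have h2 : ((m:ℝ)+2) ≠ 0 := by positivity
      have := mul_eq_zero.mp (by linarith [h] : ((m:ℝ)+2) * c (m+2) = 0)
      tauto

noncomputable def mu (α : ℝ) (t : ℕ) : ℕ → ℝ
  | 0 => 1
  | m+1 => mu α t m * ((m:ℝ)+1) / (α * ((t:ℝ) - (m:ℝ)))

lemma mu_succ (α : ℝ) (t : ℕ) (m : ℕ) :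
    mu α t (m+1) = mu α t m * ((m:ℝ)+1) / (α * ((t:ℝ) - (m:ℝ))) := rfl

lemma mu_key (α : ℝ) (hα : α ≠ 0) (t : ℕ) (m : ℕ) (hm : m < t) :
    mu α t (m+1) * (α * ((t:ℝ)-(m:ℝ))) = mu α t m * ((m:ℝ)+1) := by
  rw [mu_succ]
  have hne : α * ((t:ℝ)-(m:ℝ)) ≠ 0 := by
    apply mul_ne_zero hα
    have : (m:ℝ) < (t:ℝ) := by exact_mod_cast hm
    linarith
  field_simp
  exact mul_div_cancel_right₀ _ (right_ne_zero_of_mul hne)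

lemma mu_pos (α : ℝ) (hα : α ≠ 0) (t : ℕ) : ∀ p : ℕ, 2*p ≤ t → 0 < mu α t (2*p) := by
  intro p
  induction p with
  | zero => intro _; simp [mu]
  | succ p ih =>
    intro hp
    have h1 : 0 < mu α t (2*p) := ih (by omega)
    have e1 : 2*(p+1) = (2*p+1)+1 := by ring
    rw [e1, mu_succ, mu_succ]
    have ht1 : (0:ℝ) < (t:ℝ) - (2*p:ℕ) := by
      have : (2*p:ℕ) < t := by omega
      have := (Nat.cast_lt (α := ℝ)).mpr this
      linarith
    have ht2 : (0:ℝ) < (t:ℝ) - ((2*p+1:ℕ):ℝ) := by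
      have : (2*p+1:ℕ) < t := by omega
      have := (Nat.cast_lt (α := ℝ)).mpr this
      linarith
    push_cast at ht1 ht2 ⊢
    have e2 : mu α t (2*p) * (2*(p:ℝ)+1) / (α * ((t:ℝ) - 2*p)) * (2*(p:ℝ)+1+1) / (α * ((t:ℝ) - (2*(p:ℝ)+1)))
        = (mu α t (2*p) * (2*(p:ℝ)+1) * (2*(p:ℝ)+2)) / ((α^2) * (((t:ℝ) - 2*p) * ((t:ℝ) - (2*(p:ℝ)+1)))) := by
      field_simp; ring
    rw [e2]
    apply div_pos
    · positivity
    · apply mul_pos (by positivity) (mul_pos ht1 ht2)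


lemma pair (α : ℝ) (hα : α ≠ 0) (t : ℕ) (κ : ℝ) (hκ : κ ≠ 0) (c d : ℕ → ℝ)
    (hcs : ∀ m, t < m → c m = 0) (hds : ∀ m, t < m → d m = 0)
    (hc1 : c 1 = 0)
    (hker : ∀ m : ℕ, ((m:ℝ)+2) * c (m+2) = α * ((t:ℝ) - (m:ℝ)) * c m)
    (him0 : κ * c 0 = - d 1)
    (him : ∀ m : ℕ, κ * c (m+1) = α * ((t:ℝ) - (m:ℝ)) * d m - ((m:ℝ)+2) * d (m+2)) :
    ∀ m, c m = 0 := by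
  have codd : ∀ p : ℕ, c (2*p+1) = 0 := by
    intro p; induction p with
    | zero => simpa using hc1
    | succ p ih =>
      have h := hker (2*p+1)
      rw [ih] at h
      have e : 2*(p+1)+1 = (2*p+1)+2 := by ring
      rw [e]
      have h2 : ((2*p+1:ℕ):ℝ) + 2 ≠ 0 := by positivity
      have hz : (((2*p+1:ℕ):ℝ) + 2) * c ((2*p+1)+2) = 0 := by rw [h]; ring
      rcases mul_eq_zero.mp hz with h' | h'
      · exact absurd h' h2
      · exact h'
  have Skey : ∀ T : ℕ, T ≤ t →
      κ * (∑ m ∈ Finset.range (T+1), mu α t m * (c m)^2)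
      = -(mu α t T * ((T:ℝ)+1) * (c T * d (T+1) + c (T+1) * d T)) := by
    intro T
    induction T with
    | zero =>
      intro _
      have e0 : mu α t 0 = 1 := rfl
      simp only [zero_add, Finset.sum_range_one, hc1, e0, Nat.cast_zero]
      linear_combination c 0 * him0
    | succ T ih =>
      intro hT
      have hT' : T ≤ t := by omega
      rw [Finset.sum_range_succ, mul_add, ih hT']
      have h1 := him T
      have h2 := hker T
      have h3 := mu_key α hα t T (by omega)
      push_cast at h1 h2 h3 ⊢
      linear_combination (mu α t (T+1) * c (T+1)) * h1 + (mu α t (T+1) * d (T+1)) * h2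
        + (c (T+1) * d T + c T * d (T+1)) * h3
  have hS : (∑ m ∈ Finset.range (t+1), mu α t m * (c m)^2) = 0 := by
    have h := Skey t le_rfl
    rw [hds (t+1) (by omega), hcs (t+1) (by omega)] at h
    have : κ * (∑ m ∈ Finset.range (t+1), mu α t m * (c m)^2) = 0 := by rw [h]; ring
    rcases mul_eq_zero.mp this with h' | h'
    · exact absurd h' hκ
    · exact h'
  have hnn : ∀ m ∈ Finset.range (t+1), 0 ≤ mu α t m * (c m)^2 := by
    intro m hm
    rcases Nat.even_or_odd m with ⟨p, hp⟩ | ⟨p, hp⟩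
    · have : m = 2*p := by omega
      subst this
      have := mu_pos α hα t p (by simp at hm; omega)
      positivity
    · have : m = 2*p+1 := by omega
      subst this
      rw [codd p]; simp
  have hzero := (Finset.sum_eq_zero_iff_of_nonneg hnn).mp hS
  intro m
  rcases le_or_gt m t with hm | hm
  · rcases Nat.even_or_odd m with ⟨p, hp⟩ | ⟨p, hp⟩
    · have hm2 : m = 2*p := by omega
      subst hm2
      have h := hzero (2*p) (by simp; omega)
      have hpos := mu_pos α hα t p (by omega)
      have : (c (2*p))^2 = 0 := by
        rcases mul_eq_zero.mp h with h' | h'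
        · exact absurd h' (ne_of_gt hpos)
        · exact h'
      exact pow_eq_zero_iff (by norm_num) |>.mp this
    · have hm2 : m = 2*p+1 := by omega
      subst hm2; exact codd p
  · exact hcs m hm

lemma level_step (α β c₂ c₃ : ℝ) (hα : α ≠ 0) (N : ℕ) (t : ℕ) (ht : 3 ≤ t)
    (B : ℤ → ℤ → ℤ → ℝ)
    (hneg : ∀ i j k : ℤ, i < 0 ∨ j < 0 ∨ k < 0 → B i j k = 0)
    (hdeg : ∀ i j k : ℤ, (N:ℤ) < i + j + k → B i j k = 0)
    (hM : ∀ i j k : ℤ, 0 ≤ i → 0 ≤ j → 0 ≤ k →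
      (i:ℝ) * B i (j-1) k - (i:ℝ) * B i j k - β*((i:ℝ)+1)*B (i+1) j (k-1)
      + α*((j:ℝ)+1)*B i (j+1) k - α*((j:ℝ)+1)*B (i-2) (j+1) k
      + ((k:ℝ)+1)*B (i-1) j (k+1)
      = (if i = 0 ∧ j = 1 ∧ k = 0 then c₂ else 0)
        + (if i = 0 ∧ j = 0 ∧ k = 1 then c₃ else 0))
    (H : ∀ i j k : ℤ, (t:ℤ) < i + j → B i j k = 0) :
    ∀ i j k : ℤ, i + j = (t:ℤ) → B i j k = 0 := by
  have F1 : ∀ i k : ℤ, 0 ≤ i → i ≤ (t:ℤ)+1 → 0 ≤ k →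
      (i:ℝ) * B i ((t:ℤ)-i) k - α*((t:ℝ)+2-(i:ℝ)) * B (i-2) ((t:ℤ)+2-i) k
        + ((k:ℝ)+1) * B (i-1) ((t:ℤ)+1-i) (k+1) = 0 := by
    intro i k hi hit hk
    have h := hM i ((t:ℤ)+1-i) k hi (by omega) hk
    rw [if_neg (by rintro ⟨h1, h2, h3⟩; omega), if_neg (by rintro ⟨h1, h2, h3⟩; omega)] at h
    have z2 : B i ((t:ℤ)+1-i) k = 0 := H _ _ _ (by omega)
    have z3 : B (i+1) ((t:ℤ)+1-i) (k-1) = 0 := H _ _ _ (by omega)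
    have z4 : B i ((t:ℤ)+1-i+1) k = 0 := H _ _ _ (by omega)
    rw [z2, z3, z4] at h
    rw [show (t:ℤ)+1-i-1 = (t:ℤ)-i by ring] at h
    rw [show (t:ℤ)+1-i+1 = (t:ℤ)+2-i by ring] at h
    push_cast at h ⊢
    linear_combination h
  have F2 : ∀ k : ℤ, 0 ≤ k →
      α*(t:ℝ)* B 0 (t:ℤ) k - β * B 1 ((t:ℤ)-1) (k-1) = 0 := by
    intro k hk
    have h := hM 0 ((t:ℤ)-1) k le_rfl (by omega) hk
    rw [if_neg (by rintro ⟨h1, h2, h3⟩; omega), if_neg (by rintro ⟨h1, h2, h3⟩; omega)] at h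
    have z5 : B (0-2) ((t:ℤ)-1+1) k = 0 := hneg _ _ _ (by omega)
    have z6 : B (0-1) ((t:ℤ)-1) (k+1) = 0 := hneg _ _ _ (by omega)
    rw [z5, z6] at h
    rw [show (t:ℤ)-1+1 = (t:ℤ) by ring] at h
    push_cast at h ⊢
    linear_combination h
  have rows : ∀ s : ℕ, ∀ k : ℤ, (N:ℤ) < (t:ℤ) + k + (s:ℤ) → ∀ i : ℤ, B i ((t:ℤ)-i) k = 0 := by
    intro s
    induction s with
    | zero =>
      intro k hk i
      exact hdeg _ _ _ (by omega)
    | succ s ih =>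
      intro k hk
      rcases lt_or_ge k 0 with hkneg | hk0
      · intro i; exact hneg _ _ _ (Or.inr (Or.inr hkneg))
      have hrow1 : ∀ i : ℤ, B i ((t:ℤ)-i) (k+1) = 0 := by
        intro i'; exact ih (k+1) (by push_cast at hk ⊢; omega) i'
      have RC : ∀ i : ℤ, 0 ≤ i → i ≤ (t:ℤ)+1 →
          (i:ℝ) * B i ((t:ℤ)-i) k = α*((t:ℝ)+2-(i:ℝ)) * B (i-2) ((t:ℤ)+2-i) k := by
        intro i hi hit
        have h := F1 i k hi hit hk0
        rw [show (t:ℤ)+1-i = (t:ℤ)-(i-1) by ring] at h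
        rw [hrow1 (i-1)] at h
        linarith
      have hcs' : ∀ m : ℕ, t < m → ∀ k' : ℤ, B (m:ℤ) ((t:ℤ)-m) k' = 0 := by
        intro m hm k'
        exact hneg _ _ _ (Or.inr (Or.inl (by omega)))
      have hc1' : B 1 ((t:ℤ)-1) k = 0 := by
        have h := RC 1 (by norm_num) (by omega)
        have z : B (1-2) ((t:ℤ)+2-1) k = 0 := hneg _ _ _ (by omega)
        rw [z] at h
        norm_num at h
        exact h
      have hker' : ∀ m : ℕ, ((m:ℝ)+2) * B ((m:ℤ)+2) ((t:ℤ)-(m+2)) k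
          = α * ((t:ℝ)-(m:ℝ)) * B (m:ℤ) ((t:ℤ)-m) k := by
        intro m
        by_cases hm : (m:ℤ)+2 ≤ (t:ℤ)+1
        · have h := RC ((m:ℤ)+2) (by omega) hm
          rw [show ((m:ℤ)+2)-2 = (m:ℤ) by ring, show (t:ℤ)+2-((m:ℤ)+2) = (t:ℤ)-m by ring] at h
          push_cast at h ⊢
          linear_combination h
        · have z1 : B ((m:ℤ)+2) ((t:ℤ)-(m+2)) k = 0 := hneg _ _ _ (by omega)
          rw [z1]
          rcases eq_or_lt_of_le (by omega : (t:ℤ) ≤ (m:ℤ)) with he | hlt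
          · have he' : (t:ℝ) = (m:ℝ) := by exact_mod_cast he
            rw [he']; ring
          · have z2 : B (m:ℤ) ((t:ℤ)-m) k = 0 := hneg _ _ _ (by omega)
            rw [z2]; ring
      rcases eq_or_lt_of_le hk0 with hk00 | hk1
      · -- k = 0 case
        have hk0' : k = 0 := hk00.symm
        subst hk0'
        have hc0 : B 0 (t:ℤ) 0 = 0 := by
          have h := F2 0 le_rfl
          have z : B 1 ((t:ℤ)-1) (0-1) = 0 := hneg _ _ _ (by omega)
          rw [z] at h
          have hta : α*(t:ℝ) ≠ 0 := by
            apply mul_ne_zero hα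
            have : (0:ℝ) < (t:ℝ) := by exact_mod_cast (by omega : 0 < t)
            linarith
          have : α*(t:ℝ) * B 0 (t:ℤ) 0 = 0 := by linarith
          rcases mul_eq_zero.mp this with h' | h'
          · exact absurd h' hta
          · exact h'
        have key := ker_kill α t (fun m => B (m:ℤ) ((t:ℤ)-m) 0)
          (by simpa using hc0) (by simpa using hc1') (by intro m; exact hker' m)
        intro i
        rcases lt_or_ge i 0 with h | h
        · exact hneg _ _ _ (Or.inl h)
        · obtain ⟨m, rfl⟩ := Int.eq_ofNat_of_zero_le h
          exact key m
      · -- k ≥ 1 case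
        have hκ : (k:ℝ) ≠ 0 := by
          have : (0:ℝ) < (k:ℝ) := by exact_mod_cast hk1
          linarith
        have hdF : ∀ m : ℕ, ((m:ℤ)+2 ≤ (t:ℤ)+1) →
            (k:ℝ) * B ((m:ℤ)+1) ((t:ℤ)-(m+1)) k
            = α * ((t:ℝ)-(m:ℝ)) * B (m:ℤ) ((t:ℤ)-m) (k-1)
              - ((m:ℝ)+2) * B ((m:ℤ)+2) ((t:ℤ)-(m+2)) (k-1) := by
          intro m hm
          have h := F1 ((m:ℤ)+2) (k-1) (by omega) hm (by omega)
          rw [show ((m:ℤ)+2)-2 = (m:ℤ) by ring, show (t:ℤ)+2-((m:ℤ)+2) = (t:ℤ)-m by ring,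
            show ((m:ℤ)+2)-1 = (m:ℤ)+1 by ring, show (t:ℤ)+1-((m:ℤ)+2) = (t:ℤ)-(m+1) by ring,
            show (k-1)+1 = k by ring] at h
          push_cast at h ⊢
          linear_combination h
        have key := pair α hα t (k:ℝ) hκ
          (fun m => B (m:ℤ) ((t:ℤ)-m) k) (fun m => B (m:ℤ) ((t:ℤ)-m) (k-1))
          (by intro m hm; exact hcs' m hm k)
          (by intro m hm; exact hcs' m hm (k-1))
          (by push_cast; exact hc1')
          (by intro m; exact hker' m)
          (by -- him0 : k * c 0 = - d 1
            have h := F1 1 (k-1) (by norm_num) (by omega) (by omega)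
            have z : B (1-2) ((t:ℤ)+2-1) (k-1) = 0 := hneg _ _ _ (by omega)
            rw [z, show (1:ℤ)-1 = 0 by ring, show (t:ℤ)+1-1 = (t:ℤ) by ring,
              show (k-1)+1 = k by ring] at h
            push_cast at h ⊢
            simp only [sub_zero]
            linear_combination h)
          (by -- him
            intro m
            push_cast
            by_cases hm : (m:ℤ)+2 ≤ (t:ℤ)+1
            · have h := hdF m hm
              push_cast at h
              linear_combination h
            · have z1 : B ((m:ℤ)+1) ((t:ℤ)-((m:ℤ)+1)) k = 0 := hneg _ _ _ (by omega)
              have z3 : B ((m:ℤ)+2) ((t:ℤ)-((m:ℤ)+2)) (k-1) = 0 := hneg _ _ _ (by omega)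
              rw [z1, z3]
              rcases eq_or_lt_of_le (by omega : (t:ℤ) ≤ (m:ℤ)) with he | hlt
              · have he' : (t:ℝ) = (m:ℝ) := by exact_mod_cast he
                rw [he']; ring
              · have z2 : B (m:ℤ) ((t:ℤ)-(m:ℤ)) (k-1) = 0 := hneg _ _ _ (by omega)
                rw [z2]; ring)
        intro i
        rcases lt_or_ge i 0 with h | h
        · exact hneg _ _ _ (Or.inl h)
        · obtain ⟨m, rfl⟩ := Int.eq_ofNat_of_zero_le h
          exact key m
  intro i j k hij
  rcases lt_or_ge i 0 with h | h
  · exact hneg _ _ _ (Or.inl h)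
  rcases lt_or_ge j 0 with h' | h'
  · exact hneg _ _ _ (Or.inr (Or.inl h'))
  rcases lt_or_ge k 0 with h'' | h''
  · exact hneg _ _ _ (Or.inr (Or.inr h''))
  have : j = (t:ℤ) - i := by omega
  subst this
  exact rows (N+1) k (by push_cast; omega) i


theorem kill (α β c₂ c₃ : ℝ) (hα : α ≠ 0) (N : ℕ) (B : ℤ → ℤ → ℤ → ℝ)
    (hneg : ∀ i j k : ℤ, i < 0 ∨ j < 0 ∨ k < 0 → B i j k = 0)
    (hdeg : ∀ i j k : ℤ, (N:ℤ) < i + j + k → B i j k = 0)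
    (h0 : B 0 0 0 = 0)
    (hM : ∀ i j k : ℤ, 0 ≤ i → 0 ≤ j → 0 ≤ k →
      (i:ℝ) * B i (j-1) k - (i:ℝ) * B i j k - β*((i:ℝ)+1)*B (i+1) j (k-1)
      + α*((j:ℝ)+1)*B i (j+1) k - α*((j:ℝ)+1)*B (i-2) (j+1) k
      + ((k:ℝ)+1)*B (i-1) j (k+1)
      = (if i = 0 ∧ j = 1 ∧ k = 0 then c₂ else 0)
        + (if i = 0 ∧ j = 0 ∧ k = 1 then c₃ else 0)) :
    (∀ i j k : ℤ, B i j k = 0) ∧ c₂ = 0 ∧ c₃ = 0 := by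
  -- levels ≥ 3 vanish
  have levels : ∀ s t : ℕ, 3 ≤ t → N < t + s → ∀ i j k : ℤ, i + j = (t:ℤ) → B i j k = 0 := by
    intro s
    induction s with
    | zero =>
      intro t ht hNt i j k hij
      rcases lt_or_ge k 0 with hk | hk
      · exact hneg _ _ _ (Or.inr (Or.inr hk))
      · exact hdeg _ _ _ (by omega)
    | succ s ih =>
      intro t ht hNt
      have H : ∀ i j k : ℤ, (t:ℤ) < i + j → B i j k = 0 := by
        intro i j k hij
        rcases lt_or_ge i 0 with hi | hi
        · exact hneg _ _ _ (Or.inl hi)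
        rcases lt_or_ge j 0 with hj | hj
        · exact hneg _ _ _ (Or.inr (Or.inl hj))
        exact ih (i+j).toNat (by omega) (by omega) i j k (by omega)
      exact level_step α β c₂ c₃ hα N t ht B hneg hdeg hM H
  have lvl : ∀ i j k : ℤ, 3 ≤ i + j → B i j k = 0 := by
    intro i j k hij
    rcases lt_or_ge i 0 with hi | hi
    · exact hneg _ _ _ (Or.inl hi)
    rcases lt_or_ge j 0 with hj | hj
    · exact hneg _ _ _ (Or.inr (Or.inl hj))
    exact levels (N+1) (i+j).toNat (by omega) (by omega) i j k (by omega)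
  -- bottom equations
  have ve : ∀ k : ℤ, 0 ≤ k → ((k:ℝ)+1) * B 2 0 (k+1) = α * B 1 1 k := by
    intro k hk
    have h := hM 3 0 k (by norm_num) le_rfl hk
    rw [hneg 3 (0-1) k (by omega), lvl 3 0 k (by omega), lvl (3+1) 0 (k-1) (by omega),
      lvl 3 (0+1) k (by omega)] at h
    norm_num at h
    linear_combination h
  have we : ∀ k : ℤ, 0 ≤ k → B 1 1 k + ((k:ℝ)+1) * B 0 2 (k+1) = 0 := by
    intro k hk
    have h := hM 1 2 k (by norm_num) (by norm_num) hk
    rw [lvl 1 2 k (by omega), lvl (1+1) 2 (k-1) (by omega), lvl 1 (2+1) k (by omega),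
      hneg (1-2) (2+1) k (by omega)] at h
    norm_num at h
    linear_combination h
  have e21 : ∀ k : ℤ, 0 ≤ k → 2*B 2 0 k - 2*α*B 0 2 k + ((k:ℝ)+1)*B 1 1 (k+1) = 0 := by
    intro k hk
    have h := hM 2 1 k (by norm_num) (by norm_num) hk
    rw [lvl 2 1 k (by omega), lvl (2+1) 1 (k-1) (by omega), lvl 2 (1+1) k (by omega)] at h
    norm_num at h
    linear_combination h
  have e20 : ∀ k : ℤ, 0 ≤ k → -2*B 2 0 k - α*B 0 1 k + ((k:ℝ)+1)*B 1 0 (k+1) = 0 := by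
    intro k hk
    have h := hM 2 0 k (by norm_num) le_rfl hk
    rw [hneg 2 (0-1) k (by omega), lvl (2+1) 0 (k-1) (by omega), lvl 2 (0+1) k (by omega)] at h
    norm_num at h
    linear_combination h
  have e11 : ∀ k : ℤ, 0 ≤ k → B 1 0 k - B 1 1 k + ((k:ℝ)+1)*B 0 1 (k+1) = 0 := by
    intro k hk
    have h := hM 1 1 k (by norm_num) (by norm_num) hk
    rw [lvl (1+1) 1 (k-1) (by omega), lvl 1 (1+1) k (by omega), hneg (1-2) (1+1) k (by omega)] at h
    norm_num at h
    linear_combination h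
  have e10 : ∀ k : ℤ, 0 ≤ k →
      -B 1 0 k - 2*β*B 2 0 (k-1) + α*B 1 1 k + ((k:ℝ)+1)*B 0 0 (k+1) = 0 := by
    intro k hk
    have h := hM 1 0 k (by norm_num) le_rfl hk
    rw [hneg 1 (0-1) k (by omega), hneg (1-2) (0+1) k (by omega)] at h
    norm_num at h
    linear_combination h
  have e01 : ∀ k : ℤ, 0 ≤ k →
      -β*B 1 1 (k-1) + 2*α*B 0 2 k = (if k = 0 then c₂ else 0) := by
    intro k hk
    have h := hM 0 1 k le_rfl (by norm_num) hk
    rw [hneg (0-2) (1+1) k (by omega), hneg (0-1) 1 (k+1) (by omega)] at h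
    norm_num at h
    by_cases hk0 : k = 0
    · subst hk0
      rw [if_pos rfl] at h ⊢
      linear_combination h
    · rw [if_neg hk0] at h ⊢
      linear_combination h
  have e00 : ∀ k : ℤ, 0 ≤ k →
      -β*B 1 0 (k-1) + α*B 0 1 k = (if k = 1 then c₃ else 0) := by
    intro k hk
    have h := hM 0 0 k le_rfl le_rfl hk
    rw [hneg 0 (0-1) k (by omega), hneg (0-2) (0+1) k (by omega),
      hneg (0-1) 0 (k+1) (by omega)] at h
    norm_num at h
    by_cases hk1 : k = 1
    · subst hk1
      rw [if_pos rfl] at h ⊢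
      linear_combination h
    · rw [if_neg hk1] at h ⊢
      linear_combination h
  -- v sequence
  have vz : ∀ k : ℤ, B 1 1 k = 0 := by
    have vrec : ∀ n : ℕ, ((n:ℝ)+1)*((n:ℝ)+2)*B 1 1 ((n:ℤ)+2) = -4*α*B 1 1 (n:ℤ) := by
      intro n
      have h21 := e21 ((n:ℤ)+1) (by omega)
      have hve := ve (n:ℤ) (by omega)
      have hwe := we (n:ℤ) (by omega)
      rw [show (n:ℤ)+1+1 = (n:ℤ)+2 by ring] at h21
      push_cast at h21 hve hwe ⊢
      linear_combination ((n:ℝ)+1) * h21 - 2 * hve + 2*α*hwe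
    have hstep : ∀ n : ℕ, B 1 1 (n:ℤ) ≠ 0 → B 1 1 ((n:ℤ)+2) ≠ 0 := by
      intro n hn hcon
      have h := vrec n
      rw [hcon] at h
      have h4 : (-4*α)*B 1 1 (n:ℤ) = 0 := by linarith
      rcases mul_eq_zero.mp h4 with h' | h'
      · exact absurd h' (by simp [hα] : (-4)*α ≠ 0)
      · exact hn h'
    have hgrow := grow (fun n => B 1 1 (n:ℤ)) N
      (by intro n hn; have := hstep n hn; push_cast at this ⊢; exact this)
      (by intro n hn; exact hdeg _ _ _ (by omega))
    intro k
    rcases lt_or_ge k 0 with hk | hk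
    · exact hneg _ _ _ (Or.inr (Or.inr hk))
    · obtain ⟨n, rfl⟩ := Int.eq_ofNat_of_zero_le hk
      exact hgrow n
  have u_pos : ∀ k : ℤ, 0 ≤ k → B 2 0 (k+1) = 0 := by
    intro k hk
    have h := ve k hk
    rw [vz] at h
    have hk1 : ((k:ℝ)+1) ≠ 0 := by
      have : (0:ℝ) ≤ (k:ℝ) := by exact_mod_cast hk
      linarith
    rcases mul_eq_zero.mp (by linarith : ((k:ℝ)+1) * B 2 0 (k+1) = 0) with h' | h'
    · exact absurd h' hk1
    · exact h'
  have w_pos : ∀ k : ℤ, 0 ≤ k → B 0 2 (k+1) = 0 := by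
    intro k hk
    have h := we k hk
    rw [vz] at h
    have hk1 : ((k:ℝ)+1) ≠ 0 := by
      have : (0:ℝ) ≤ (k:ℝ) := by exact_mod_cast hk
      linarith
    rcases mul_eq_zero.mp (by linarith : ((k:ℝ)+1) * B 0 2 (k+1) = 0) with h' | h'
    · exact absurd h' hk1
    · exact h'
  -- qx sequence
  have qxz : ∀ k : ℤ, B 1 0 k = 0 := by
    have qxrec : ∀ n : ℕ, ((n:ℝ)+1)*((n:ℝ)+2)*B 1 0 ((n:ℤ)+2) = -α*B 1 0 (n:ℤ) := by
      intro n
      have h20 := e20 ((n:ℤ)+1) (by omega)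
      have h11 := e11 (n:ℤ) (by omega)
      rw [u_pos (n:ℤ) (by omega), show (n:ℤ)+1+1 = (n:ℤ)+2 by ring] at h20
      rw [vz] at h11
      push_cast at h20 h11 ⊢
      linear_combination ((n:ℝ)+1) * h20 + α * h11
    have hstep : ∀ n : ℕ, B 1 0 (n:ℤ) ≠ 0 → B 1 0 ((n:ℤ)+2) ≠ 0 := by
      intro n hn hcon
      have h := qxrec n
      rw [hcon] at h
      have h4 : (-α)*B 1 0 (n:ℤ) = 0 := by linarith
      rcases mul_eq_zero.mp h4 with h' | h'
      · exact absurd h' (by simp [hα] : -α ≠ 0)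
      · exact hn h'
    have hgrow := grow (fun n => B 1 0 (n:ℤ)) N
      (by intro n hn; have := hstep n hn; push_cast at this ⊢; exact this)
      (by intro n hn; exact hdeg _ _ _ (by omega))
    intro k
    rcases lt_or_ge k 0 with hk | hk
    · exact hneg _ _ _ (Or.inr (Or.inr hk))
    · obtain ⟨n, rfl⟩ := Int.eq_ofNat_of_zero_le hk
      exact hgrow n
  -- qy
  have qy0 : B 0 1 0 = 0 := by
    have h := e00 0 le_rfl
    rw [if_neg (by norm_num), hneg 1 0 (0-1) (by omega)] at h
    have h2 : α * B 0 1 0 = 0 := by linarith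
    rcases mul_eq_zero.mp h2 with h' | h'
    · exact absurd h' hα
    · exact h'
  have qyz : ∀ k : ℤ, B 0 1 k = 0 := by
    intro k
    rcases lt_or_ge k 0 with hk | hk
    · exact hneg _ _ _ (Or.inr (Or.inr hk))
    rcases eq_or_lt_of_le hk with hk' | hk'
    · rw [← hk']; exact qy0
    have h := e11 (k-1) (by omega)
    rw [qxz, vz, show (k-1)+1 = k by ring] at h
    have hk1 : ((k-1:ℤ):ℝ)+1 ≠ 0 := by
      have : (1:ℝ) ≤ ((k:ℤ):ℝ) := by exact_mod_cast hk'
      push_cast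
      linarith
    rcases mul_eq_zero.mp (by linarith : (((k-1:ℤ):ℝ)+1) * B 0 1 k = 0) with h' | h'
    · exact absurd h' hk1
    · exact h'
  -- u0, w0
  have u0 : B 2 0 0 = 0 := by
    have h := e20 0 le_rfl
    rw [qy0, qxz] at h
    norm_num at h
    linarith
  have uz : ∀ k : ℤ, B 2 0 k = 0 := by
    intro k
    rcases lt_or_ge k 0 with hk | hk
    · exact hneg _ _ _ (Or.inr (Or.inr hk))
    rcases eq_or_lt_of_le hk with hk' | hk'
    · rw [← hk']; exact u0
    · have h2 := u_pos (k-1) (by omega)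
      rw [show (k-1)+1 = k by ring] at h2
      exact h2
  have w0 : B 0 2 0 = 0 := by
    have h := e21 0 le_rfl
    rw [u0, vz] at h
    have h2 : α * B 0 2 0 = 0 := by linarith
    rcases mul_eq_zero.mp h2 with h' | h'
    · exact absurd h' hα
    · exact h'
  have wz : ∀ k : ℤ, B 0 2 k = 0 := by
    intro k
    rcases lt_or_ge k 0 with hk | hk
    · exact hneg _ _ _ (Or.inr (Or.inr hk))
    rcases eq_or_lt_of_le hk with hk' | hk'
    · rw [← hk']; exact w0
    · have h2 := w_pos (k-1) (by omega)
      rw [show (k-1)+1 = k by ring] at h2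
      exact h2
  -- c₂, c₃
  have hc2 : c₂ = 0 := by
    have h := e01 0 le_rfl
    rw [if_pos rfl, hneg 1 1 (0-1) (by omega), w0] at h
    linarith
  have hc3 : c₃ = 0 := by
    have h := e00 1 (by norm_num)
    rw [if_pos rfl, qxz, qyz] at h
    linarith
  -- p
  have pz : ∀ k : ℤ, B 0 0 k = 0 := by
    intro k
    rcases lt_or_ge k 0 with hk | hk
    · exact hneg _ _ _ (Or.inr (Or.inr hk))
    rcases eq_or_lt_of_le hk with hk' | hk'
    · rw [← hk']; exact h0
    have h := e10 (k-1) (by omega)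
    rw [qxz, uz, vz, show (k-1)+1 = k by ring] at h
    have hk1 : ((k-1:ℤ):ℝ)+1 ≠ 0 := by
      have : (1:ℝ) ≤ ((k:ℤ):ℝ) := by exact_mod_cast hk'
      push_cast
      linarith
    rcases mul_eq_zero.mp (by linarith : (((k-1:ℤ):ℝ)+1) * B 0 0 k = 0) with h' | h'
    · exact absurd h' hk1
    · exact h'
  refine ⟨?_, hc2, hc3⟩
  intro i j k
  rcases lt_or_ge i 0 with hi | hi
  · exact hneg _ _ _ (Or.inl hi)
  rcases lt_or_ge j 0 with hj | hj
  · exact hneg _ _ _ (Or.inr (Or.inl hj))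
  rcases lt_or_ge (i+j) 3 with hij | hij
  · have hi2 : i ≤ 2 := by omega
    have hj2 : j ≤ 2 := by omega
    interval_cases i <;> interval_cases j <;> first
      | exact pz k | exact qxz k | exact qyz k | exact uz k | exact vz k | exact wz k
      | exact hneg _ _ _ (by omega)
  · exact lvl _ _ _ hij


noncomputable def m3 (i j k : ℕ) : Fin 3 →₀ ℕ :=
  Finsupp.single 0 i + Finsupp.single 1 j + Finsupp.single 2 k

lemma m3_apply0 (i j k : ℕ) : m3 i j k 0 = i := by
  simp [m3, Finsupp.single_apply]

lemma m3_apply1 (i j k : ℕ) : m3 i j k 1 = j := by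
  simp [m3, Finsupp.single_apply]

lemma m3_apply2 (i j k : ℕ) : m3 i j k 2 = k := by
  simp [m3, Finsupp.single_apply]

lemma m3_eta (m : Fin 3 →₀ ℕ) : m3 (m 0) (m 1) (m 2) = m := by
  ext x
  fin_cases x
  · simp [m3_apply0]
  · simp [m3_apply1]
  · simp [m3_apply2]

lemma m3_inj {i j k i' j' k' : ℕ} (h : m3 i j k = m3 i' j' k') : i = i' ∧ j = j' ∧ k = k' := by
  refine ⟨?_, ?_, ?_⟩
  · have := congrArg (fun f => f 0) h; simpa [m3_apply0] using this
  · have := congrArg (fun f => f 1) h; simpa [m3_apply1] using this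
  · have := congrArg (fun f => f 2) h; simpa [m3_apply2] using this

lemma m3_add0 (i j k : ℕ) : m3 i j k + Finsupp.single 0 1 = m3 (i+1) j k := by
  ext x
  fin_cases x <;> simp [m3, Finsupp.single_apply]

lemma m3_add1 (i j k : ℕ) : m3 i j k + Finsupp.single 1 1 = m3 i (j+1) k := by
  ext x
  fin_cases x <;> simp [m3, Finsupp.single_apply]

lemma m3_add2 (i j k : ℕ) : m3 i j k + Finsupp.single 2 1 = m3 i j (k+1) := by
  ext x
  fin_cases x <;> simp [m3, Finsupp.single_apply]

lemma m3_sub0 (i j k : ℕ) : m3 (i+1) j k - Finsupp.single 0 1 = m3 i j k := by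
  rw [← m3_add0]; exact add_tsub_cancel_right _ _

lemma m3_sub1 (i j k : ℕ) : m3 i (j+1) k - Finsupp.single 1 1 = m3 i j k := by
  rw [← m3_add1]; exact add_tsub_cancel_right _ _

lemma m3_sub2 (i j k : ℕ) : m3 i j (k+1) - Finsupp.single 2 1 = m3 i j (k) := by
  rw [← m3_add2]; exact add_tsub_cancel_right _ _

lemma coeff_pderiv (v : Fin 3) (p : MvPolynomial (Fin 3) ℝ) (m : Fin 3 →₀ ℕ) :
    coeff m (pderiv v p) = ((m v : ℝ) + 1) * coeff (m + Finsupp.single v 1) p := by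
  induction p using MvPolynomial.induction_on' with
  | add p q hp hq => simp [map_add, coeff_add, hp, hq, mul_add]
  | monomial s a =>
    rw [pderiv_monomial]
    rw [coeff_monomial, coeff_monomial]
    split_ifs with h1 h2 h2
    · -- s - single v 1 = m, s = m + single v 1
      have hv : s v = m v + 1 := by
        rw [h2]; simp [Finsupp.single_apply]
      rw [hv]; push_cast; ring
    · -- s - single v 1 = m, s ≠ m + single v 1
      have hv : s v = 0 := by
        by_contra hsv
        apply h2
        have : s = s - Finsupp.single v 1 + Finsupp.single v 1 := by
          ext x
          by_cases hx : x = v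
          · subst hx
            simp [Finsupp.single_apply]
            omega
          · simp [Finsupp.single_apply, hx, Ne.symm hx]
        rw [this, h1]
      rw [hv]; push_cast; ring
    · -- ¬(s - single v 1 = m), s = m + single v 1
      exfalso
      apply h1
      subst h2
      ext x
      by_cases hx : x = v
      · subst hx; simp [Finsupp.single_apply]
      · simp [Finsupp.single_apply, hx, Ne.symm hx]
    · ring


lemma m3_eq_iff (i j k i' j' k' : ℕ) : m3 i j k = m3 i' j' k' ↔ (i = i' ∧ j = j' ∧ k = k') := by
  constructor
  · exact m3_inj
  · rintro ⟨rfl, rfl, rfl⟩; rfl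

lemma m3_sum (i j k : ℕ) : ∑ x ∈ (m3 i j k).support, (m3 i j k) x = i + j + k := by
  have h : ∀ m : Fin 3 →₀ ℕ, ∑ x ∈ m.support, m x = m 0 + m 1 + m 2 := by
    intro m
    rw [show ∑ x ∈ m.support, m x = m.sum (fun _ e => e) from rfl]
    rw [Finsupp.sum_fintype _ _ (fun _ => rfl)]
    simp [Fin.sum_univ_three]
  rw [h, m3_apply0, m3_apply1, m3_apply2]

lemma coeffX1 (a b c : ℕ) : coeff (m3 a b c) (X 1 : MvPolynomial (Fin 3) ℝ)
    = if a = 0 ∧ b = 1 ∧ c = 0 then 1 else 0 := by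
  rw [coeff_X']
  have hs : (Finsupp.single 1 1 : Fin 3 →₀ ℕ) = m3 0 1 0 := by simp [m3]
  simp only [hs, m3_eq_iff, @eq_comm ℕ 0 a, @eq_comm ℕ 1 b, @eq_comm ℕ 0 c]

lemma coeffX2 (a b c : ℕ) : coeff (m3 a b c) (X 2 : MvPolynomial (Fin 3) ℝ)
    = if a = 0 ∧ b = 0 ∧ c = 1 then 1 else 0 := by
  rw [coeff_X']
  have hs : (Finsupp.single 2 1 : Fin 3 →₀ ℕ) = m3 0 0 1 := by simp [m3]
  simp only [hs, m3_eq_iff, @eq_comm ℕ 0 a, @eq_comm ℕ 0 b, @eq_comm ℕ 1 c]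

lemma masterN (c₂ c₃ α β : ℝ) (p : MvPolynomial (Fin 3) ℝ)
    (hexp : X 0 * (X 1 * pderiv 0 p) - X 0 * pderiv 0 p - C β * (X 2 * pderiv 0 p)
      + C α * pderiv 1 p - C α * (X 0 * (X 0 * pderiv 1 p)) + X 0 * pderiv 2 p
      = C c₂ * X 1 + C c₃ * X 2) :
    ∀ a b c : ℕ,
      (a:ℝ) * (if 1 ≤ b then coeff (m3 a (b-1) c) p else 0)
      - (a:ℝ) * coeff (m3 a b c) p
      - β*((a:ℝ)+1) * (if 1 ≤ c then coeff (m3 (a+1) b (c-1)) p else 0)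
      + α*((b:ℝ)+1) * coeff (m3 a (b+1) c) p
      - α*((b:ℝ)+1) * (if 2 ≤ a then coeff (m3 (a-2) (b+1) c) p else 0)
      + ((c:ℝ)+1) * (if 1 ≤ a then coeff (m3 (a-1) b (c+1)) p else 0)
      = (if a = 0 ∧ b = 1 ∧ c = 0 then c₂ else 0)
        + (if a = 0 ∧ b = 0 ∧ c = 1 then c₃ else 0) := by
  intro a b c
  have E := congrArg (coeff (m3 a b c)) hexp
  rcases a with _|_|a <;> rcases b with _|b <;> rcases c with _|c <;>
    (norm_num only [coeff_add, coeff_sub, coeff_C_mul, coeff_X_mul', Finsupp.mem_support_iff,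
      m3_apply0, m3_apply1, m3_apply2, ne_eq, Nat.succ_ne_zero, not_false_eq_true,
      m3_sub0, m3_sub1, m3_sub2, coeff_pderiv, m3_add0, m3_add1, m3_add2,
      coeffX1, coeffX2, Nat.add_eq_zero, mul_ite, false_and, and_false, true_and, and_true,
      if_true, if_false, ite_true, ite_false, mul_one, mul_zero, one_mul, add_zero, zero_add,
      eq_self_iff_true] at E ⊢) <;>
    (try push_cast at E) <;> (try push_cast) <;> linear_combination E


noncomputable def Bof (p : MvPolynomial (Fin 3) ℝ) : ℤ → ℤ → ℤ → ℝ := fun i j k =>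
  if 0 ≤ i ∧ 0 ≤ j ∧ 0 ≤ k then coeff (m3 i.toNat j.toNat k.toNat) p else 0

lemma Bof_nat (p : MvPolynomial (Fin 3) ℝ) (a b c : ℕ) :
    Bof p (a:ℤ) (b:ℤ) (c:ℤ) = coeff (m3 a b c) p := by
  unfold Bof
  rw [if_pos ⟨by omega, by omega, by omega⟩]
  simp

lemma Bof_neg (p : MvPolynomial (Fin 3) ℝ) {i j k : ℤ} (h : i < 0 ∨ j < 0 ∨ k < 0) :
    Bof p i j k = 0 := by
  unfold Bof
  rw [if_neg]
  rintro ⟨h1, h2, h3⟩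
  omega

lemma Bof_subj (p : MvPolynomial (Fin 3) ℝ) (a b c : ℕ) :
    Bof p (a:ℤ) ((b:ℤ) - 1) (c:ℤ) = (if 1 ≤ b then coeff (m3 a (b-1) c) p else 0) := by
  rcases b with _ | b
  · rw [Bof_neg p (by omega), if_neg (by omega)]
  · rw [show ((b+1:ℕ):ℤ) - 1 = (b:ℤ) by push_cast; ring, Bof_nat, if_pos (by omega)]
    norm_num
lemma Bof_subk (p : MvPolynomial (Fin 3) ℝ) (a b c : ℕ) :
    Bof p ((a:ℤ)+1) (b:ℤ) ((c:ℤ) - 1) = (if 1 ≤ c then coeff (m3 (a+1) b (c-1)) p else 0) := by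
  rcases c with _ | c
  · rw [Bof_neg p (by omega), if_neg (by omega)]
  · rw [show ((c+1:ℕ):ℤ) - 1 = (c:ℤ) by push_cast; ring,
      show ((a:ℤ)+1) = ((a+1:ℕ):ℤ) by push_cast; ring, Bof_nat, if_pos (by omega)]
    norm_num
lemma Bof_suba2 (p : MvPolynomial (Fin 3) ℝ) (a b c : ℕ) :
    Bof p ((a:ℤ)-2) ((b:ℤ)+1) (c:ℤ) = (if 2 ≤ a then coeff (m3 (a-2) (b+1) c) p else 0) := by
  rcases a with _ | _ | a
  · rw [Bof_neg p (by omega), if_neg (by omega)]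
  · rw [Bof_neg p (by omega), if_neg (by omega)]
  · rw [show ((a+2:ℕ):ℤ) - 2 = (a:ℤ) by push_cast; ring,
      show ((b:ℤ)+1) = ((b+1:ℕ):ℤ) by push_cast; ring, Bof_nat, if_pos (by omega)]
    rw [show a+1+1-2 = a by omega]
lemma Bof_suba1 (p : MvPolynomial (Fin 3) ℝ) (a b c : ℕ) :
    Bof p ((a:ℤ)-1) (b:ℤ) ((c:ℤ)+1) = (if 1 ≤ a then coeff (m3 (a-1) b (c+1)) p else 0) := by
  rcases a with _ | a
  · rw [Bof_neg p (by omega), if_neg (by omega)]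
  · rw [show ((a+1:ℕ):ℤ) - 1 = (a:ℤ) by push_cast; ring,
      show ((c:ℤ)+1) = ((c+1:ℕ):ℤ) by push_cast; ring, Bof_nat, if_pos (by omega)]
    norm_num
lemma Bof_addj (p : MvPolynomial (Fin 3) ℝ) (a b c : ℕ) :
    Bof p (a:ℤ) ((b:ℤ)+1) (c:ℤ) = coeff (m3 a (b+1) c) p := by
  rw [show ((b:ℤ)+1) = ((b+1:ℕ):ℤ) by push_cast; ring, Bof_nat]

end Stmt9aux

open Stmt9aux in
/-- Prop. 3, Case 2: α ≠ 0, κ = λ = 0. Every polynomial g with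
no constant term satisfying X g = β₀ + β₁x + β₂y + β₃z is the linear
combination β₁·z + β₀·(-x²/2 + y/α - y²/(2α) - βz²/2); in particular
β₂ = -β₀ and β₃ = 0. -/
theorem stmt_9 (α β : ℝ) (hα : α ≠ 0) (β₀ β₁ β₂ β₃ : ℝ)
    (g : MvPolynomial (Fin 3) ℝ) (hg0 : g.coeff 0 = 0)
    (heq : (X 0 * (X 1 - 1) - C β * X 2) * pderiv 0 g
      + (C α * (1 - X 0 ^ 2)) * pderiv 1 g
      + X 0 * pderiv 2 g
      = C β₀ + C β₁ * X 0 + C β₂ * X 1 + C β₃ * X 2) :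
    β₂ = -β₀ ∧ β₃ = 0 ∧
      g = C β₁ * X 2 + C β₀ *
        (C (-(1 : ℝ) / 2) * X 0 ^ 2 + C (1 / α) * X 1
          - C (1 / (2 * α)) * X 1 ^ 2 - C (β / 2) * X 2 ^ 2) := by
  classical
  have hDG : ((X 0 * (X 1 - 1) - C β * X 2) : MvPolynomial (Fin 3) ℝ) * pderiv 0 (C β₁ * X 2 + C β₀ *
        (C (-(1 : ℝ) / 2) * X 0 ^ 2 + C (1 / α) * X 1
          - C (1 / (2 * α)) * X 1 ^ 2 - C (β / 2) * X 2 ^ 2))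
      + (C α * (1 - X 0 ^ 2)) * pderiv 1 (C β₁ * X 2 + C β₀ *
        (C (-(1 : ℝ) / 2) * X 0 ^ 2 + C (1 / α) * X 1
          - C (1 / (2 * α)) * X 1 ^ 2 - C (β / 2) * X 2 ^ 2))
      + X 0 * pderiv 2 (C β₁ * X 2 + C β₀ *
        (C (-(1 : ℝ) / 2) * X 0 ^ 2 + C (1 / α) * X 1
          - C (1 / (2 * α)) * X 1 ^ 2 - C (β / 2) * X 2 ^ 2))
      = C β₀ + C β₁ * X 0 - C β₀ * X 1 := by
    have h1 : (C α : MvPolynomial (Fin 3) ℝ) * C (1/α) = 1 := by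
      rw [← C_mul]; field_simp; exact C_1
    have h2 : (C α : MvPolynomial (Fin 3) ℝ) * C (1/(2*α)) * 2 = 1 := by
      rw [(map_ofNat C 2).symm, ← C_mul, ← C_mul]
      rw [show α * (1/(2*α)) * 2 = 1 by field_simp]
      exact C_1
    have h3 : (C (-(1:ℝ)/2) : MvPolynomial (Fin 3) ℝ) * 2 = -1 := by
      rw [(map_ofNat C 2).symm, ← C_mul]
      norm_num
    have h4 : (C (β/2) : MvPolynomial (Fin 3) ℝ) * 2 = C β := by
      rw [(map_ofNat C 2).symm, ← C_mul]
      norm_num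
    have pd1 : pderiv (0:Fin 3) (X 1 : MvPolynomial (Fin 3) ℝ) = 0 := pderiv_X_of_ne (by decide)
    have pd2 : pderiv (0:Fin 3) (X 2 : MvPolynomial (Fin 3) ℝ) = 0 := pderiv_X_of_ne (by decide)
    have pd3 : pderiv (1:Fin 3) (X 0 : MvPolynomial (Fin 3) ℝ) = 0 := pderiv_X_of_ne (by decide)
    have pd4 : pderiv (1:Fin 3) (X 2 : MvPolynomial (Fin 3) ℝ) = 0 := pderiv_X_of_ne (by decide)
    have pd5 : pderiv (2:Fin 3) (X 0 : MvPolynomial (Fin 3) ℝ) = 0 := pderiv_X_of_ne (by decide)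
    have pd6 : pderiv (2:Fin 3) (X 1 : MvPolynomial (Fin 3) ℝ) = 0 := pderiv_X_of_ne (by decide)
    simp only [map_add, map_sub, pderiv_C_mul, pderiv_pow, pderiv_C, pderiv_X_self,
      show (2-1 : ℕ) = 1 from rfl, pow_one, pd1, pd2, pd3, pd4, pd5, pd6]
    linear_combination h1 * (C β₀ * (1 - X 0^2) : MvPolynomial (Fin 3) ℝ)
      - h2 * (C β₀ * (1 - X 0^2) * X 1 : MvPolynomial (Fin 3) ℝ)
      + h3 * (C β₀ * (X 0 * (X 1 - 1) - C β * X 2) * X 0 : MvPolynomial (Fin 3) ℝ)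
      - h4 * (C β₀ * X 0 * X 2 : MvPolynomial (Fin 3) ℝ)
  set hp : MvPolynomial (Fin 3) ℝ := g - (C β₁ * X 2 + C β₀ *
        (C (-(1 : ℝ) / 2) * X 0 ^ 2 + C (1 / α) * X 1
          - C (1 / (2 * α)) * X 1 ^ 2 - C (β / 2) * X 2 ^ 2)) with hhp
  have hexp : X 0 * (X 1 * pderiv 0 hp) - X 0 * pderiv 0 hp - C β * (X 2 * pderiv 0 hp)
      + C α * pderiv 1 hp - C α * (X 0 * (X 0 * pderiv 1 hp)) + X 0 * pderiv 2 hp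
      = C (β₂ + β₀) * X 1 + C β₃ * X 2 := by
    rw [hhp, map_sub, map_sub, map_sub, show (C (β₂ + β₀) : MvPolynomial (Fin 3) ℝ)
      = C β₂ + C β₀ from map_add C β₂ β₀]
    linear_combination heq - hDG
  have hp0 : hp.coeff 0 = 0 := by
    rw [hhp]
    simp only [coeff_sub, coeff_add, coeff_C_mul, coeff_zero_X, coeff_X_pow, hg0,
      Finsupp.single_eq_zero]
    norm_num
  have master := masterN (β₂+β₀) β₃ α β hp hexp
  have hkill := kill α β (β₂+β₀) β₃ hα hp.totalDegree (Bof hp)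
    (fun i j k h => Bof_neg hp h)
    (by
      intro i j k hsum
      by_cases hc : 0 ≤ i ∧ 0 ≤ j ∧ 0 ≤ k
      · obtain ⟨hi, hj, hk⟩ := hc
        obtain ⟨a, rfl⟩ := Int.eq_ofNat_of_zero_le hi
        obtain ⟨b, rfl⟩ := Int.eq_ofNat_of_zero_le hj
        obtain ⟨c, rfl⟩ := Int.eq_ofNat_of_zero_le hk
        rw [Bof_nat]
        apply coeff_eq_zero_of_totalDegree_lt
        rw [m3_sum]
        omega
      · exact Bof_neg hp (by omega)
      )
    (by
      have : Bof hp (0:ℤ) (0:ℤ) (0:ℤ) = coeff (m3 0 0 0) hp := Bof_nat hp 0 0 0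
      rw [this, show m3 0 0 0 = 0 by simp [m3]]
      exact hp0)
    (by
      intro i j k hi hj hk
      obtain ⟨a, rfl⟩ := Int.eq_ofNat_of_zero_le hi
      obtain ⟨b, rfl⟩ := Int.eq_ofNat_of_zero_le hj
      obtain ⟨c, rfl⟩ := Int.eq_ofNat_of_zero_le hk
      have key := master a b c
      rw [Bof_subj, Bof_nat, Bof_subk, Bof_addj, Bof_suba2, Bof_suba1]
      have hiff1 : (((a:ℕ):ℤ) = 0 ∧ ((b:ℕ):ℤ) = 1 ∧ ((c:ℕ):ℤ) = 0)
          ↔ (a = 0 ∧ b = 1 ∧ c = 0) := by omega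
      have hiff2 : (((a:ℕ):ℤ) = 0 ∧ ((b:ℕ):ℤ) = 0 ∧ ((c:ℕ):ℤ) = 1)
          ↔ (a = 0 ∧ b = 0 ∧ c = 1) := by omega
      simp only [hiff1, hiff2]
      push_cast
      linear_combination key)
  obtain ⟨hall, hc2, hc3⟩ := hkill
  have hpz : hp = 0 := by
    apply MvPolynomial.eq_zero_iff.mpr
    intro d
    have h := hall (d 0) (d 1) (d 2)
    rw [Bof_nat, m3_eta] at h
    exact h
  refine ⟨by linarith, hc3, ?_⟩
  have := sub_eq_zero.mp hpz
  exact this
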